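/- Let S be a commutative local ring with involution * and fixed ring R, V free of rank 2m with nondegenerate skew hermitian form h and symplectic basis. Let u, v be basis vectors of V with h(u,u) = h(v,v) = 0 and h(u,v) ∈ R^× (a unit fixed by *). Then there is an element of the group T generated by the transvections f_{a,w} (a ∈ R, w a basis vector of length 0) mapping u to v; explicitly, f_{-h(u,v)⁻¹, v-u}(u) = v. -/

import Mathlib

variable {S V : Type*} [CommRing S] [StarRing S] [AddCommGroup V] [Module S V]

/-- `b` is a symplectic basis for the skew hermitian form `h`. -/
def IsSympBasis {m : ℕ} (h : V →ₛₗ[starRingEnd S] V →ₗ[S] S)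
    (b : Module.Basis (Fin m ⊕ Fin m) S V) : Prop :=
  (∀ i j, h (b (.inl i)) (b (.inr j)) = if i = j then 1 else 0) ∧
  (∀ i j, h (b (.inl i)) (b (.inl j)) = 0) ∧
  (∀ i j, h (b (.inr i)) (b (.inr j)) = 0)

/-- `v` is a basis vector of the free module `V` of rank `2m`. -/
def IsBasisVector (S : Type*) {V : Type*} [CommRing S] [AddCommGroup V] [Module S V]
    (m : ℕ) (v : V) : Prop :=
  ∃ (c : Module.Basis (Fin m ⊕ Fin m) S V) (i : Fin m ⊕ Fin m), c i = v

/-- The unitary transvection `f_{a,v} : u ↦ u + a h(v,u) v`. -/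
def transvect (h : V →ₛₗ[starRingEnd S] V →ₗ[S] S) (a : S) (v : V) : Module.End S V :=
  LinearMap.id + LinearMap.smulRight (a • h v) v

/-- The set of invertible endomorphisms given by unitary transvections `f_{a,v}`
with `a ∈ R` and `v` a basis vector of length zero. -/
def transvSet (h : V →ₛₗ[starRingEnd S] V →ₗ[S] S) (m : ℕ) : Set (Module.End S V)ˣ :=
  {g | ∃ (a : S) (v : V), star a = a ∧ h v v = 0 ∧ IsBasisVector S m v ∧
    (g : Module.End S V) = transvect h a v}


lemma transvect_mul' (h : V →ₛₗ[starRingEnd S] V →ₗ[S] S) (a c : S) (w : V) (hw : h w w = 0) :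
    transvect h a w * transvect h c w = transvect h (a + c) w := by
  ext x
  simp only [transvect, Module.End.mul_apply, LinearMap.add_apply, LinearMap.id_apply,
    LinearMap.smulRight_apply, LinearMap.smul_apply, smul_eq_mul, map_add, map_smul, hw,
    mul_zero, add_zero, smul_zero, zero_smul]
  rw [add_assoc, ← add_smul, ← add_mul]

lemma transvect_zero' (h : V →ₛₗ[starRingEnd S] V →ₗ[S] S) (w : V) :
    transvect h 0 w = 1 := by
  ext x; simp [transvect]

lemma isBasisVector_of_unit_repr {m : ℕ} (b : Module.Basis (Fin m ⊕ Fin m) S V) (w : V)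
    (k : Fin m ⊕ Fin m) (hk : IsUnit (b.repr w k)) : IsBasisVector S m w := by
  classical
  set c : (Fin m ⊕ Fin m) → V := Function.update ⇑b k w with hc
  have hdet : b.det c = b.repr w k := by
    rw [Module.Basis.det_apply]
    have hm : b.toMatrix c = Matrix.updateCol 1 k (fun i => b.repr w i) := by
      ext i j
      by_cases hj : j = k
      · subst hj; simp [Module.Basis.toMatrix_apply, c]
      · simp [Module.Basis.toMatrix_apply, c, Function.update_of_ne hj, Matrix.updateCol_apply,
          hj, Matrix.one_apply, Finsupp.single_apply, eq_comm]
    rw [hm, ← Matrix.cramer_apply, Matrix.cramer_one, Module.End.one_apply]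
  have hdu : IsUnit (b.det c) := hdet ▸ hk
  obtain ⟨hli, hsp⟩ := (Module.Basis.is_basis_iff_det b).mpr hdu
  exact ⟨Module.Basis.mk hli hsp.ge, k, by rw [Module.Basis.mk_apply]; simp [c]⟩

/-- if `u, v` are basis vectors of length `0` with `h(u,v) ∈ R^×`, then
some element of the transvection group `T` maps `u` to `v`; explicitly
`f_{-h(u,v)⁻¹, v-u}(u) = v`. -/
theorem stmt12 [IsLocalRing S] {m : ℕ}
    (h : V →ₛₗ[starRingEnd S] V →ₗ[S] S)
    (hskew : ∀ x y, star (h x y) = - h y x)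
    (hnd : ∀ x, (∀ y, h x y = 0) → x = 0)
    (b : Module.Basis (Fin m ⊕ Fin m) S V) (hb : IsSympBasis h b)
    (u v : V) (hu : IsBasisVector S m u) (hv : IsBasisVector S m v)
    (hu0 : h u u = 0) (hv0 : h v v = 0)
    (hfix : star (h u v) = h u v) (hunit : IsUnit (h u v)) :
    (∃ g ∈ Subgroup.closure (transvSet h m), (g : Module.End S V) u = v) ∧
      transvect h (-Ring.inverse (h u v)) (v - u) u = v :=  by
  classical
  set α := h u v with hα
  have hvu : h v u = -α := by
    have := hskew u v
    rw [hfix] at this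
    rw [← neg_neg (h v u), ← this]
  have hwu : h (v - u) u = -α := by
    rw [map_sub, LinearMap.sub_apply, hvu, hu0, sub_zero]
  have hww : h (v - u) (v - u) = 0 := by
    rw [map_sub h v u]
    simp only [LinearMap.sub_apply, map_sub, hv0, hu0, hvu, ← hα]
    ring
  -- the transvection sends u to v
  have happ : transvect h (-Ring.inverse α) (v - u) u = v := by
    simp only [transvect, LinearMap.add_apply, LinearMap.id_apply, LinearMap.smulRight_apply,
      LinearMap.smul_apply, smul_eq_mul, hwu]
    have h1 : -Ring.inverse α * -α = 1 := by
      rw [neg_mul_neg, Ring.inverse_mul_cancel _ hunit]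
    rw [h1, one_smul]
    abel
  -- star-fixedness of the coefficient
  have hstar : star (-Ring.inverse α) = -Ring.inverse α := by
    rw [star_neg, ← Ring.inverse_star, hfix]
  -- v - u has a unit coordinate, so it is a basis vector
  have hkey : ∃ k, IsUnit (b.repr (v - u) k) := by
    by_contra hcon
    push_neg at hcon
    have hmem : h (v - u) u ∈ IsLocalRing.maximalIdeal S := by
      have hrepr : (∑ i, b.repr (v - u) i • b i) = v - u := b.sum_repr (v - u)
      rw [← hrepr, map_sum, LinearMap.sum_apply]
      refine Ideal.sum_mem _ fun k _ => ?_
      rw [map_smulₛₗ, LinearMap.smul_apply, smul_eq_mul]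
      refine Ideal.mul_mem_right _ _ ?_
      rw [IsLocalRing.mem_maximalIdeal, mem_nonunits_iff]
      exact fun hx => hcon k (isUnit_star.mp hx)
    rw [hwu, IsLocalRing.mem_maximalIdeal, mem_nonunits_iff] at hmem
    exact hmem hunit.neg
  obtain ⟨k, hk⟩ := hkey
  have hbv : IsBasisVector S m (v - u) := isBasisVector_of_unit_repr b (v - u) k hk
  -- the transvection as a unit
  refine ⟨⟨⟨transvect h (-Ring.inverse α) (v - u), transvect h (Ring.inverse α) (v - u),
    by rw [transvect_mul' h _ _ _ hww, neg_add_cancel, transvect_zero'],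
    by rw [transvect_mul' h _ _ _ hww, add_neg_cancel, transvect_zero']⟩,
    Subgroup.subset_closure ⟨-Ring.inverse α, v - u, hstar, hww, hbv, rfl⟩, happ⟩, happ⟩
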